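/- Let μ be a nonzero finite Borel measure on S^{n-1} not concentrated on any closed hemisphere, i.e., ∫_{S^{n-1}} max(⟨u,v⟩,0) dμ(u) > 0 for all v ∈ S^{n-1}. Let K_i be convex bodies containing the origin in their interiors whose polar bodies K_i^* are contained in a fixed ball RB^n, and suppose K_i^* → L in the Hausdorff metric where L is a convex body with the origin on its boundary. Let φ:(0,∞)→ℝ be continuous, strictly increasing, with φ(t)→∞ as t→∞. Then (1/|μ|)∫_{S^{n-1}} φ(h_{K_i}(u)) dμ(u) → ∞ as i→∞. -/

import Mathlib

open MeasureTheory Metric Set Filter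
open scoped RealInnerProductSpace NNReal ENNReal Topology

noncomputable section

abbrev Euc (n : ℕ) := EuclideanSpace ℝ (Fin n)

def usphere (n : ℕ) : Set (Euc n) := Metric.sphere 0 1

def smeas (n : ℕ) : Measure (Euc n) := (μH[(n : ℝ) - 1]).restrict (usphere n)


def polarBody (n : ℕ) (K : Set (Euc n)) : Set (Euc n) := {x | ∀ y ∈ K, ⟪x, y⟫ ≤ 1}

def suppFn (n : ℕ) (K : Set (Euc n)) (u : Euc n) : ℝ := sSup ((fun y => ⟪y, u⟫) '' K)

def radialFn (n : ℕ) (K : Set (Euc n)) (x : Euc n) : ℝ := sSup {t : ℝ | 0 ≤ t ∧ t • x ∈ K}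

lemma bddAbove_inner_image {n : ℕ} {K : Set (Euc n)} (hb : Bornology.IsBounded K)
    (u : Euc n) : BddAbove ((fun y => ⟪y, u⟫) '' K) := by
  obtain ⟨C, hC⟩ := hb.subset_closedBall 0
  refine ⟨C * ‖u‖, ?_⟩
  rintro _ ⟨y, hy, rfl⟩
  have h1 : ‖y‖ ≤ C := by simpa [dist_zero_right] using hC hy
  calc ⟪y, u⟫ ≤ ‖y‖ * ‖u‖ := real_inner_le_norm y u
    _ ≤ C * ‖u‖ := mul_le_mul_of_nonneg_right h1 (norm_nonneg u)

lemma le_suppFn {n : ℕ} {K : Set (Euc n)} (hb : Bornology.IsBounded K)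
    {y : Euc n} (hy : y ∈ K) (u : Euc n) : ⟪y, u⟫ ≤ suppFn n K u :=
  le_csSup (bddAbove_inner_image hb u) ⟨y, hy, rfl⟩

lemma suppFn_le {n : ℕ} {K : Set (Euc n)} (hK : K.Nonempty) {u : Euc n} {a : ℝ}
    (h : ∀ y ∈ K, ⟪y, u⟫ ≤ a) : suppFn n K u ≤ a :=
  csSup_le (hK.image _) (by rintro _ ⟨y, hy, rfl⟩; exact h y hy)

set_option maxHeartbeats 1000000 in
theorem stmt11 (n : ℕ) (μ : Measure (Euc n)) [IsFiniteMeasure μ] (hμ0 : μ ≠ 0)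
    (hμsupp : μ (usphere n)ᶜ = 0)
    (hμhemi : ∀ v ∈ usphere n, 0 < ∫ u, max ⟪u, v⟫ 0 ∂μ)
    (K : ℕ → Set (Euc n))
    (hK : ∀ i, Convex ℝ (K i) ∧ IsCompact (K i) ∧ 0 ∈ interior (K i))
    (R : ℝ) (hR : 0 < R) (hKR : ∀ i, polarBody n (K i) ⊆ closedBall 0 R)
    (L : Set (Euc n)) (hLconv : Convex ℝ L) (hLcomp : IsCompact L)
    (hLint : (interior L).Nonempty) (hL0 : 0 ∈ frontier L)
    (hconv : Tendsto (fun i => Metric.hausdorffDist (polarBody n (K i)) L) atTop (𝓝 0))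
    (φ : ℝ → ℝ) (hφc : ContinuousOn φ (Ioi 0)) (hφm : StrictMonoOn φ (Ioi 0))
    (hφtop : Tendsto φ atTop atTop) :
    Tendsto (fun i => (1 / (μ univ).toReal) * ∫ u, φ (suppFn n (K i) u) ∂μ)
      atTop atTop := by
  classical
  have hRinv : (0:ℝ) < 1 / R := by positivity
  have hbpos : 0 < (μ univ).toReal :=
    ENNReal.toReal_pos (Measure.measure_univ_pos.mpr hμ0).ne' (measure_ne_top μ univ)
  set b := (μ univ).toReal with hbdef
  have hae_sph : ∀ᵐ u ∂μ, u ∈ usphere n := by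
    have := measure_eq_zero_iff_ae_notMem.mp hμsupp
    simpa using this
  -- basic facts about the bodies
  have hKb : ∀ i, Bornology.IsBounded (K i) := fun i => (hK i).2.1.isBounded
  have hK0 : ∀ i, (0 : Euc n) ∈ K i := fun i => interior_subset (hK i).2.2
  have hKne : ∀ i, (K i).Nonempty := fun i => ⟨0, hK0 i⟩
  -- a norm bound coming from the polar body
  have hnorm_le : ∀ (i : ℕ) (t : ℝ) (u : Euc n), ‖u‖ = 1 → 0 ≤ t →
      t * suppFn n (K i) u < 1 → t ≤ R := by
    intro i t u hu ht h1
    have hmem : t • u ∈ polarBody n (K i) := by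
      intro y hy
      have h2 : ⟪y, u⟫ ≤ suppFn n (K i) u := le_suppFn (hKb i) hy u
      have h3 : ⟪t • u, y⟫ = t * ⟪y, u⟫ := by
        rw [real_inner_smul_left, real_inner_comm]
      rw [h3]
      calc t * ⟪y, u⟫ ≤ t * suppFn n (K i) u := mul_le_mul_of_nonneg_left h2 ht
        _ ≤ 1 := h1.le
    have h4 := hKR i hmem
    rw [mem_closedBall, dist_zero_right, norm_smul, hu, mul_one, Real.norm_eq_abs,
      abs_of_nonneg ht] at h4
    exact h4
  have hsupp_nonneg : ∀ (i : ℕ) (u : Euc n), 0 ≤ suppFn n (K i) u := fun i u => by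
    have := le_suppFn (hKb i) (hK0 i) u
    simpa using this
  -- lower bound 1/R on the sphere
  have hHlo : ∀ i, ∀ u ∈ usphere n, 1 / R ≤ suppFn n (K i) u := by
    intro i u hu
    have hu1 : ‖u‖ = 1 := mem_sphere_zero_iff_norm.mp hu
    by_contra hlt
    push_neg at hlt
    have h0 : 0 ≤ suppFn n (K i) u := hsupp_nonneg i u
    rcases eq_or_lt_of_le h0 with h0' | h0'
    · have : (R + 1) ≤ R := hnorm_le i (R+1) u hu1 (by linarith) (by rw [← h0']; linarith)
      linarith
    · have hR1 : R < 1 / suppFn n (K i) u := by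
        rw [lt_div_iff₀ h0']
        calc R * suppFn n (K i) u < R * (1/R) := by exact mul_lt_mul_of_pos_left hlt hR
          _ = 1 := by field_simp
      obtain ⟨t, ht1, ht2⟩ := exists_between hR1
      have : t ≤ R := hnorm_le i t u hu1 (by linarith) ((lt_div_iff₀ h0').mp ht2)
      linarith
  -- upper bound on the sphere
  have hHub : ∀ i, ∃ C : ℝ, 1/R ≤ C ∧ ∀ u ∈ usphere n, suppFn n (K i) u ≤ C := by
    intro i
    obtain ⟨C0, hC0⟩ := (hKb i).subset_closedBall 0
    refine ⟨max C0 (1/R), le_max_right _ _, fun u hu => ?_⟩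
    have hu1 : ‖u‖ = 1 := mem_sphere_zero_iff_norm.mp hu
    refine suppFn_le (hKne i) fun y hy => ?_
    have h1 : ‖y‖ ≤ C0 := by simpa [dist_zero_right] using hC0 hy
    calc ⟪y, u⟫ ≤ ‖y‖ * ‖u‖ := real_inner_le_norm y u
      _ = ‖y‖ := by rw [hu1, mul_one]
      _ ≤ max C0 (1/R) := le_trans h1 (le_max_left _ _)
  -- continuity of the support function
  have hHcont : ∀ i, Continuous (suppFn n (K i)) := by
    intro i
    obtain ⟨C0, hC0⟩ := (hKb i).subset_closedBall 0
    set C := max C0 0 with hC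
    have hkey : ∀ u v : Euc n, suppFn n (K i) u ≤ suppFn n (K i) v + C * dist u v := by
      intro u v
      refine suppFn_le (hKne i) fun y hy => ?_
      have h1 : ⟪y, u⟫ - ⟪y, v⟫ = ⟪y, u - v⟫ := (inner_sub_right y u v).symm
      have h2 : ⟪y, u - v⟫ ≤ ‖y‖ * ‖u - v‖ := real_inner_le_norm _ _
      have h3 : ‖y‖ ≤ C := le_trans (by simpa [dist_zero_right] using hC0 hy) (le_max_left _ _)
      have h4 : ⟪y, v⟫ ≤ suppFn n (K i) v := le_suppFn (hKb i) hy v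
      have h5 : ‖y‖ * ‖u - v‖ ≤ C * ‖u - v‖ := mul_le_mul_of_nonneg_right h3 (norm_nonneg _)
      rw [dist_eq_norm]
      linarith
    have hlip : LipschitzWith (Real.toNNReal C) (suppFn n (K i)) := by
      apply LipschitzWith.of_dist_le_mul
      intro u v
      rw [Real.dist_eq, abs_sub_le_iff, Real.coe_toNNReal C (le_max_right _ _)]
      refine ⟨by linarith [hkey u v], ?_⟩
      have := hkey v u
      rw [dist_comm] at this
      linarith
    exact hlip.continuous
  -- construction of the supporting direction w0
  have hLclosed : IsClosed L := hLcomp.isClosed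
  have h0L : (0 : Euc n) ∈ L := hLclosed.closure_eq ▸ frontier_subset_closure hL0
  have h0ni : (0 : Euc n) ∉ interior L := by
    have h := hL0
    rw [frontier, mem_diff] at h
    exact h.2
  obtain ⟨f, hf⟩ := geometric_hahn_banach_open_point hLconv.interior isOpen_interior h0ni
  have hf0 : f 0 = 0 := map_zero f
  obtain ⟨z, hz⟩ := hLint
  have hfneg : ∀ y ∈ L, f y ≤ 0 := by
    intro y hy
    have hseg : ∀ t : ℝ, t ∈ Ioc (0:ℝ) 1 → f (t • z + (1 - t) • y) < 0 := by
      intro t ht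
      have hmem : t • z + (1 - t) • y ∈ interior L :=
        hLconv.combo_interior_self_mem_interior hz hy ht.1 (by linarith [ht.2]) (by ring)
      have := hf _ hmem
      rwa [hf0] at this
    have hcont : Tendsto (fun t : ℝ => f (t • z + (1 - t) • y)) (𝓝[>] 0) (𝓝 (f y)) := by
      have hc : Continuous fun t : ℝ => f (t • z + (1 - t) • y) :=
        f.continuous.comp ((continuous_id.smul continuous_const).add
          ((continuous_const.sub continuous_id).smul continuous_const))
      have h0 : (fun t : ℝ => f (t • z + (1 - t) • y)) 0 = f y := by simp
      have h1 := (hc.tendsto 0).mono_left (nhdsWithin_le_nhds (s := Ioi (0:ℝ)))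
      simpa using h1
    refine le_of_tendsto hcont ?_
    filter_upwards [Ioo_mem_nhdsGT_of_mem (by constructor <;> norm_num : (0:ℝ) ∈ Ico (0:ℝ) 1)]
      with t ht
    exact (hseg t ⟨ht.1, ht.2.le⟩).le
  set v : Euc n := (InnerProductSpace.toDual ℝ (Euc n)).symm f with hv
  have hvapp : ∀ x : Euc n, ⟪v, x⟫ = f x := fun x => InnerProductSpace.toDual_symm_apply
  have hvz : ⟪v, z⟫ < 0 := by
    rw [hvapp]
    have := hf z hz
    rwa [hf0] at this
  have hvne : v ≠ 0 := by
    intro h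
    rw [h, inner_zero_left] at hvz
    linarith
  have hvnorm : 0 < ‖v‖ := norm_pos_iff.mpr hvne
  set w0 : Euc n := ‖v‖⁻¹ • v with hw0
  have hw0n : ‖w0‖ = 1 := by
    rw [hw0, norm_smul, norm_inv, norm_norm, inv_mul_cancel₀ hvnorm.ne']
  have hw0s : w0 ∈ usphere n := mem_sphere_zero_iff_norm.mpr hw0n
  have hLw0 : ∀ y ∈ L, ⟪y, w0⟫ ≤ 0 := by
    intro y hy
    have h1 : ⟪w0, y⟫ = ‖v‖⁻¹ * f y := by rw [hw0, real_inner_smul_left, hvapp]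
    rw [real_inner_comm, h1]
    have h2 : (0:ℝ) ≤ ‖v‖⁻¹ := by positivity
    nlinarith [hfneg y hy]
  have hLb : Bornology.IsBounded L := hLcomp.isBounded
  -- choice of ε with positive measure cap
  have hexists : ∃ k : ℕ, μ {u : Euc n | 1/((k:ℝ)+1) ≤ ⟪u, w0⟫} ≠ 0 := by
    by_contra hc
    push_neg at hc
    have hunion : {u : Euc n | 0 < ⟪u, w0⟫} ⊆
        ⋃ k : ℕ, {u : Euc n | 1/((k:ℝ)+1) ≤ ⟪u, w0⟫} := by
      intro u hu
      obtain ⟨k, hk⟩ := exists_nat_one_div_lt (show (0:ℝ) < ⟪u, w0⟫ from hu)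
      exact mem_iUnion.mpr ⟨k, hk.le⟩
    have hnull : μ {u : Euc n | 0 < ⟪u, w0⟫} = 0 :=
      measure_mono_null hunion (measure_iUnion_null hc)
    have hae : ∀ᵐ u ∂μ, max ⟪u, w0⟫ 0 = 0 := by
      filter_upwards [measure_eq_zero_iff_ae_notMem.mp hnull] with u hu
      simp only [mem_setOf_eq, not_lt] at hu
      exact max_eq_right hu
    have hzero : ∫ u, max ⟪u, w0⟫ 0 ∂μ = 0 := by
      rw [integral_congr_ae hae, integral_zero]
    linarith [hμhemi w0 hw0s]
  obtain ⟨k, hk⟩ := hexists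
  set ε : ℝ := 1/((k:ℝ)+1) with hε
  have hεpos : 0 < ε := by positivity
  have hεle1 : ε ≤ 1 := by
    rw [hε, div_le_one (by positivity)]
    linarith [(Nat.cast_nonneg k : (0:ℝ) ≤ k)]
  set A : Set (Euc n) := {u : Euc n | ε ≤ ⟪u, w0⟫} with hA
  have hA_meas : MeasurableSet A :=
    measurableSet_le measurable_const ((continuous_id.inner continuous_const).measurable)
  set a : ℝ := (μ A).toReal with ha
  have hapos : 0 < a := ENNReal.toReal_pos hk (measure_ne_top μ A)
  -- the support function of the polar in direction w0 tends to 0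
  have hpolarb : ∀ i, Bornology.IsBounded (polarBody n (K i)) :=
    fun i => isBounded_closedBall.subset (hKR i)
  have hpolar0 : ∀ i, (0 : Euc n) ∈ polarBody n (K i) := by
    intro i y hy; simp [inner_zero_left]
  set s : ℕ → ℝ := fun i => suppFn n (polarBody n (K i)) w0 with hs
  have hs_nonneg : ∀ i, 0 ≤ s i := fun i => by
    have := le_suppFn (hpolarb i) (hpolar0 i) w0
    simpa using this
  have hEdist : ∀ i, EMetric.hausdorffEdist (polarBody n (K i)) L ≠ ⊤ := fun i =>
    Metric.hausdorffEdist_ne_top_of_nonempty_of_bounded ⟨0, hpolar0 i⟩ ⟨0, h0L⟩ (hpolarb i) hLb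
  have hs_le : ∀ i, s i ≤ hausdorffDist (polarBody n (K i)) L := by
    intro i
    by_contra hcon
    push_neg at hcon
    set δ := (s i - hausdorffDist (polarBody n (K i)) L) / 2 with hδ
    have hδpos : 0 < δ := by simp only [hδ]; linarith
    have : s i ≤ hausdorffDist (polarBody n (K i)) L + δ := by
      refine suppFn_le ⟨0, hpolar0 i⟩ fun y hy => ?_
      obtain ⟨zz, hzL, hdist⟩ := exists_dist_lt_of_hausdorffDist_lt hy
        (lt_add_of_pos_right _ hδpos) (hEdist i)
      have h1 : ⟪zz, w0⟫ ≤ 0 := hLw0 zz hzL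
      have h2 : ⟪y - zz, w0⟫ ≤ dist y zz := by
        have := real_inner_le_norm (y - zz) w0
        rw [hw0n, mul_one] at this
        rwa [dist_eq_norm]
      have h3 : ⟪y, w0⟫ - ⟪zz, w0⟫ = ⟪y - zz, w0⟫ := (inner_sub_left y zz w0).symm
      linarith
    simp only [hδ] at this
    linarith
  have hs0 : Tendsto s atTop (𝓝 0) :=
    tendsto_of_tendsto_of_tendsto_of_le_of_le tendsto_const_nhds hconv hs_nonneg hs_le
  -- the key inequality on the spherical cap
  have keyineq : ∀ i, ∀ u ∈ usphere n, ε ≤ ⟪u, w0⟫ → ε ≤ s i * suppFn n (K i) u := by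
    intro i u hu hcap
    have hpos : 0 < suppFn n (K i) u := lt_of_lt_of_le hRinv (hHlo i u hu)
    by_contra hcon
    push_neg at hcon
    have h1 : s i / ε < 1 / suppFn n (K i) u := by
      rw [div_lt_div_iff₀ hεpos hpos]
      linarith
    obtain ⟨t, ht1, ht2⟩ := exists_between h1
    have ht0 : 0 < t := lt_of_le_of_lt (div_nonneg (hs_nonneg i) hεpos.le) ht1
    have htm : t • u ∈ polarBody n (K i) := by
      intro y hy
      have h3 : ⟪t • u, y⟫ = t * ⟪y, u⟫ := by
        rw [real_inner_smul_left, real_inner_comm]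
      rw [h3]
      have h4 : t * ⟪y, u⟫ < 1 :=
        calc t * ⟪y, u⟫ ≤ t * suppFn n (K i) u :=
              mul_le_mul_of_nonneg_left (le_suppFn (hKb i) hy u) ht0.le
          _ < 1 := (lt_div_iff₀ hpos).mp ht2
      exact h4.le
    have h5 : ⟪t • u, w0⟫ ≤ s i := le_suppFn (hpolarb i) htm w0
    rw [real_inner_smul_left] at h5
    have h7 : s i < t * ε := (div_lt_iff₀ hεpos).mp ht1
    have h8 : t * ε ≤ t * ⟪u, w0⟫ := mul_le_mul_of_nonneg_left hcap ht0.le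
    linarith
  have hw0cap : ε ≤ ⟪w0, w0⟫ := by
    rw [real_inner_self_eq_norm_mul_norm, hw0n]
    linarith
  have hspos : ∀ i, 0 < s i := by
    intro i
    have h1 := keyineq i w0 hw0s hw0cap
    have h2 : 0 < suppFn n (K i) w0 := lt_of_lt_of_le hRinv (hHlo i w0 hw0s)
    by_contra hcon
    push_neg at hcon
    nlinarith
  -- integrability
  have hint : ∀ i, Integrable (fun u => φ (suppFn n (K i) u)) μ := by
    intro i
    obtain ⟨C, hC1, hC2⟩ := hHub i
    have hcontOn : ContinuousOn (fun u => φ (suppFn n (K i) u)) (usphere n) := by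
      refine ContinuousOn.comp hφc (hHcont i).continuousOn fun u hu => ?_
      exact lt_of_lt_of_le hRinv (hHlo i u hu)
    have hmeasS : MeasurableSet (usphere n) := isClosed_sphere.measurableSet
    have hrestrict : μ.restrict (usphere n) = μ := Measure.restrict_eq_self_of_ae_mem hae_sph
    have haem : AEStronglyMeasurable (fun u => φ (suppFn n (K i) u)) μ := by
      rw [← hrestrict]
      exact (hcontOn.aemeasurable hmeasS).aestronglyMeasurable
    obtain ⟨D, hD⟩ := (isCompact_Icc (a := 1/R) (b := C)).exists_bound_of_continuousOn
      (hφc.mono fun x hx => lt_of_lt_of_le hRinv hx.1)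
    refine ⟨haem, HasFiniteIntegral.of_bounded (C := D) ?_⟩
    filter_upwards [hae_sph] with u hu
    exact hD _ ⟨hHlo i u hu, hC2 u hu⟩
  -- main limit
  have hmain : Tendsto (fun i => ∫ u, φ (suppFn n (K i) u) ∂μ) atTop atTop := by
    rw [Filter.tendsto_atTop]
    intro M
    obtain ⟨T₀, hT₀⟩ := eventually_atTop.mp
      (hφtop.eventually_ge_atTop ((M - φ (1/R) * b) / a + φ (1/R)))
    set T := max T₀ (1/R) with hT
    have hTpos : 0 < T := lt_of_lt_of_le hRinv (le_max_right _ _)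
    have hφT : (M - φ (1/R) * b) / a + φ (1/R) ≤ φ T := hT₀ T (le_max_left _ _)
    have hεT : 0 < ε / T := by positivity
    have hev : ∀ᶠ i in atTop, s i * T ≤ ε := by
      filter_upwards [hs0.eventually_lt_const hεT] with i hi
      exact ((lt_div_iff₀ hTpos).mp hi).le
    filter_upwards [hev] with i hi
    set g : Euc n → ℝ := fun u => φ (1/R) + A.indicator (fun _ => φ T - φ (1/R)) u with hg
    have hg_int : Integrable g μ :=
      (integrable_const _).add ((integrable_const _).indicator hA_meas)
    have hgle : ∀ᵐ u ∂μ, g u ≤ φ (suppFn n (K i) u) := by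
      filter_upwards [hae_sph] with u hu
      have hmem1 : suppFn n (K i) u ∈ Ioi (0:ℝ) := lt_of_lt_of_le hRinv (hHlo i u hu)
      by_cases hmemA : u ∈ A
      · have hTle : T ≤ suppFn n (K i) u :=
          le_of_mul_le_mul_left (le_trans hi (keyineq i u hu hmemA)) (hspos i)
        have h9 : φ T ≤ φ (suppFn n (K i) u) :=
          hφm.monotoneOn (mem_Ioi.mpr hTpos) hmem1 hTle
        simp only [hg, indicator_of_mem hmemA]
        linarith
      · have h9 : φ (1/R) ≤ φ (suppFn n (K i) u) :=
          hφm.monotoneOn (mem_Ioi.mpr hRinv) hmem1 (hHlo i u hu)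
        simpa [hg, indicator_of_notMem hmemA] using h9
    have hgint : ∫ u, g u ∂μ = φ (1/R) * b + (φ T - φ (1/R)) * a := by
      rw [hg, integral_add (integrable_const _) ((integrable_const _).indicator hA_meas),
        integral_const, integral_indicator hA_meas, integral_const]
      simp only [measureReal_def, Measure.restrict_apply_univ, smul_eq_mul]
      rw [← hbdef, ← ha]
      ring
    have hle : ∫ u, g u ∂μ ≤ ∫ u, φ (suppFn n (K i) u) ∂μ :=
      integral_mono_ae hg_int (hint i) hgle
    rw [hgint] at hle
    have hfinal : M ≤ φ (1/R) * b + (φ T - φ (1/R)) * a := by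
      have h1 : (M - φ (1/R) * b) / a * a = M - φ (1/R) * b := div_mul_cancel₀ _ hapos.ne'
      have h2 : (M - φ (1/R) * b) / a ≤ φ T - φ (1/R) := by linarith
      have h3 := mul_le_mul_of_nonneg_right h2 hapos.le
      rw [h1] at h3
      linarith
    linarith
  have hc : 0 < 1 / b := by positivity
  exact hmain.const_mul_atTop hc
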